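/- arXiv:1905.02010 — 2 statements merged into one kernel-verified Lean document; each statement's English description precedes it below -/
import Mathlib

section
/- For any table r and any lists of attributes X = [X₁, …, X_n] and Y = [Y₁, …, Y_m]: r satisfies the order dependency X ↦→ Y if and only if (a) for every attribute A occurring in Y, A is a constant in the context set(X) over r, and (b) for all indices 1 ≤ i ≤ n and 1 ≤ j ≤ m, attributes X_i and Y_j are order compatible in the context {X₁, …, X_{i−1}} ∪ {Y₁, …, Y_{j−1}} over r. -/
/-- `ordLE X t s` : the lexicographic weak order `t ≼_X s` induced by a list
of attributes `X` (each attribute is a function `τ → ℤ`). -/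
def ordLE {τ : Type*} : List (τ → ℤ) → τ → τ → Prop
  | [], _, _ => True
  | A :: T, t, s => A t < A s ∨ (A t = A s ∧ ordLE T t s)

/-- The table `r` satisfies the order dependency (OD) `X ↦→ Y`. -/
def satOD {τ : Type*} (r : List τ) (X Y : List (τ → ℤ)) : Prop :=
  ∀ t ∈ r, ∀ s ∈ r, ordLE X t s → ordLE Y t s

/-- `X` and `Y` are order equivalent over `r` (`X ↔ Y`). -/
def orderEquiv {τ : Type*} (r : List τ) (X Y : List (τ → ℤ)) : Prop :=
  satOD r X Y ∧ satOD r Y X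

/-- `X` and `Y` are order compatible over `r` (the OCD `X ~ Y`). -/
def satOCD {τ : Type*} (r : List τ) (X Y : List (τ → ℤ)) : Prop :=
  orderEquiv r (X ++ Y) (Y ++ X)

/-- The table `r` satisfies the functional dependency (FD) `X → Y`. -/
def satFD {τ : Type*} (r : List τ) (X Y : Finset (τ → ℤ)) : Prop :=
  ∀ t ∈ r, ∀ s ∈ r, (∀ A ∈ X, A t = A s) → ∀ B ∈ Y, B t = B s

/-- Attribute `A` is a constant in the context `Z` over `r`
(the set-based canonical OD `Z : [] ↦→ A`). -/
def constIn {τ : Type*} [DecidableEq (τ → ℤ)] (r : List τ) (Z : Finset (τ → ℤ))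
    (A : τ → ℤ) : Prop :=
  ∀ Zp : List (τ → ℤ), Zp.Nodup → Zp.toFinset = Z → satOD r Zp (Zp ++ [A])

/-- Attributes `A` and `B` are order compatible in the context `Z` over `r`
(the set-based canonical OCD `Z : A ~ B`). -/
def ocIn {τ : Type*} [DecidableEq (τ → ℤ)] (r : List τ) (Z : Finset (τ → ℤ))
    (A B : τ → ℤ) : Prop :=
  ∀ Zp : List (τ → ℤ), Zp.Nodup → Zp.toFinset = Z → satOCD r (Zp ++ [A]) (Zp ++ [B])

theorem ordLE_of_eq {τ : Type*} {X : List (τ → ℤ)} {t s : τ}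
    (h : ∀ A ∈ X, A t = A s) : ordLE X t s := by
  induction X with
  | nil => trivial
  | cons A T ih =>
    exact Or.inr ⟨h A (by simp), ih fun B hB => h B (by simp [hB])⟩

theorem ordLE_total {τ : Type*} (X : List (τ → ℤ)) (t s : τ) :
    ordLE X t s ∨ ordLE X s t := by
  induction X with
  | nil => exact Or.inl trivial
  | cons A T ih =>
    rcases lt_trichotomy (A t) (A s) with h | h | h
    · exact Or.inl (Or.inl h)
    · rcases ih with h' | h'
      · exact Or.inl (Or.inr ⟨h, h'⟩)
      · exact Or.inr (Or.inr ⟨h.symm, h'⟩)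
    · exact Or.inr (Or.inl h)

theorem ordLE_antisymm {τ : Type*} {X : List (τ → ℤ)} {t s : τ}
    (h1 : ordLE X t s) (h2 : ordLE X s t) : ∀ A ∈ X, A t = A s := by
  induction X with
  | nil => simp
  | cons A T ih =>
    rcases h1 with h1 | ⟨hA, h1⟩
    · rcases h2 with h2 | ⟨hA', h2⟩
      · exact absurd h2 (not_lt.2 h1.le)
      · exact absurd hA'.symm (ne_of_lt h1)
    · intro B hB
      rcases List.mem_cons.1 hB with rfl | hB
      · exact hA
      · rcases h2 with h2 | ⟨_, h2⟩
        · exact absurd h2 (by rw [hA]; exact lt_irrefl _)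
        · exact ih h1 h2 B hB

theorem ordLE_append {τ : Type*} (P Q : List (τ → ℤ)) (t s : τ) :
    ordLE (P ++ Q) t s ↔
      ((ordLE P t s ∧ ¬ ∀ A ∈ P, A t = A s) ∨ ((∀ A ∈ P, A t = A s) ∧ ordLE Q t s)) := by
  induction P with
  | nil => simp [ordLE]
  | cons A T ih =>
    show (A t < A s ∨ (A t = A s ∧ ordLE (T ++ Q) t s)) ↔ _
    rw [ih]
    constructor
    · rintro (h | ⟨hA, (⟨h1, h2⟩ | ⟨h1, h2⟩)⟩)
      · exact Or.inl ⟨Or.inl h, by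
          intro hall; exact absurd (hall A (by simp)) (ne_of_lt h)⟩
      · exact Or.inl ⟨Or.inr ⟨hA, h1⟩, by
          intro hall; exact h2 fun B hB => hall B (by simp [hB])⟩
      · refine Or.inr ⟨?_, h2⟩
        intro B hB
        rcases List.mem_cons.1 hB with rfl | hB
        · exact hA
        · exact h1 B hB
    · rintro (⟨(h | ⟨hA, h1⟩), hne⟩ | ⟨hall, hQ⟩)
      · exact Or.inl h
      · refine Or.inr ⟨hA, Or.inl ⟨h1, ?_⟩⟩
        intro hT; exact hne (by
          intro B hB
          rcases List.mem_cons.1 hB with rfl | hB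
          · exact hA
          · exact hT B hB)
      · exact Or.inr ⟨hall A (by simp), Or.inr ⟨fun B hB => hall B (by simp [hB]), hQ⟩⟩

theorem ordLE_single {τ : Type*} {A : τ → ℤ} {t s : τ} : ordLE [A] t s ↔ A t ≤ A s := by
  show (A t < A s ∨ (A t = A s ∧ True)) ↔ _
  rw [le_iff_lt_or_eq]; tauto

theorem exists_first {τ : Type*} (X : List (τ → ℤ)) (t s : τ) (h : ordLE X t s)
    (hne : ¬ ∀ A ∈ X, A t = A s) :
    ∃ i : Fin X.length, (∀ A ∈ X.take i, A t = A s) ∧ X.get i t < X.get i s := by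
  induction X with
  | nil => simp at hne
  | cons A T ih =>
    rcases h with h | ⟨hA, hT⟩
    · exact ⟨⟨0, by simp⟩, by simp, h⟩
    · have hT' : ¬ ∀ B ∈ T, B t = B s := by
        intro hall; exact hne (by
          intro B hB
          rcases List.mem_cons.1 hB with rfl | hB
          · exact hA
          · exact hall B hB)
      obtain ⟨i, h1, h2⟩ := ih hT hT'
      refine ⟨⟨i + 1, by simpa using i.isLt⟩, ?_, h2⟩
      intro B hB
      simp only [Fin.val_mk, List.take_succ_cons] at hB
      rcases List.mem_cons.1 hB with rfl | hB
      · exact hA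
      · exact h1 B hB

theorem list_decomp {τ : Type*} (X : List (τ → ℤ)) (i : Fin X.length) :
    X = X.take i ++ X.get i :: X.drop (i + 1) := by
  conv_lhs => rw [← List.take_append_drop i X]
  congr 1
  exact (List.getElem_cons_drop i.isLt).symm


/-- from eq on a prefix and strict at `i`, get `ordLE X t s`. -/
theorem ordLE_of_take_get {τ : Type*} {X : List (τ → ℤ)} {i : Fin X.length} {t s : τ}
    (heq : ∀ A ∈ X.take i, A t = A s) (hlt : X.get i t < X.get i s) : ordLE X t s := by
  rw [list_decomp X i, ordLE_append]
  exact Or.inr ⟨heq, Or.inl hlt⟩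

/-- from `ordLE X t s` and eq on prefix up to `j`, get `X.get j t ≤ X.get j s`. -/
theorem take_get_le {τ : Type*} {X : List (τ → ℤ)} {j : Fin X.length} {t s : τ}
    (h : ordLE X t s) (heq : ∀ A ∈ X.take j, A t = A s) : X.get j t ≤ X.get j s := by
  rw [list_decomp X j, ordLE_append] at h
  rcases h with ⟨_, hne⟩ | ⟨_, h⟩
  · exact absurd heq hne
  · rcases h with h | ⟨h, _⟩
    · exact h.le
    · exact h.le

theorem constIn_iff {τ : Type*} [DecidableEq (τ → ℤ)] (r : List τ) (Z : Finset (τ → ℤ))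
    (A : τ → ℤ) :
    constIn r Z A ↔ ∀ t ∈ r, ∀ s ∈ r, (∀ B ∈ Z, B t = B s) → A t = A s := by
  constructor
  · intro h t ht s hs heq
    have heq' : ∀ B ∈ Z.toList, B t = B s := fun B hB => heq B (Finset.mem_toList.1 hB)
    have h1 := h Z.toList Z.nodup_toList (Finset.toList_toFinset Z) t ht s hs
      (ordLE_of_eq heq')
    have h2 := h Z.toList Z.nodup_toList (Finset.toList_toFinset Z) s hs t ht
      (ordLE_of_eq fun B hB => (heq' B hB).symm)
    rw [ordLE_append] at h1 h2
    rcases h1 with ⟨_, hne⟩ | ⟨_, h1⟩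
    · exact absurd heq' hne
    rcases h2 with ⟨_, hne⟩ | ⟨_, h2⟩
    · exact absurd (fun B hB => (heq' B hB).symm) hne
    exact le_antisymm (ordLE_single.1 h1) (ordLE_single.1 h2)
  · intro h Zp _ htf t ht s hs hord
    rw [ordLE_append]
    by_cases hc : ∀ B ∈ Zp, B t = B s
    · refine Or.inr ⟨hc, ordLE_single.2 (le_of_eq (h t ht s hs ?_))⟩
      intro B hB
      exact hc B (by rw [← htf] at hB; exact List.mem_toFinset.1 hB)
    · exact Or.inl ⟨hord, hc⟩

theorem ocIn_aux {τ : Type*} (r : List τ) (Zp : List (τ → ℤ)) (A B : τ → ℤ)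
    (hyp : ∀ t ∈ r, ∀ s ∈ r, (∀ C ∈ Zp, C t = C s) → ¬(A t < A s ∧ B s < B t)) :
    satOD r ((Zp ++ [A]) ++ (Zp ++ [B])) ((Zp ++ [B]) ++ (Zp ++ [A])) := by
  intro t ht s hs h
  rw [List.append_assoc, List.singleton_append, ordLE_append] at h
  rw [List.append_assoc, List.singleton_append, ordLE_append]
  rcases h with ⟨h1, h2⟩ | ⟨heq, h3⟩
  · exact Or.inl ⟨h1, h2⟩
  · refine Or.inr ⟨heq, ?_⟩
    have hle : B t ≤ B s ∧ A t ≤ A s := by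
      rcases h3 with hA | ⟨hA, h4⟩
      · refine ⟨not_lt.1 fun hb => hyp t ht s hs heq ⟨hA, hb⟩, hA.le⟩
      · rw [ordLE_append] at h4
        rcases h4 with ⟨_, hne⟩ | ⟨_, h4⟩
        · exact absurd heq hne
        · exact ⟨ordLE_single.1 h4, hA.le⟩
    rcases lt_or_eq_of_le hle.1 with hB | hB
    · exact Or.inl hB
    · refine Or.inr ⟨hB, ?_⟩
      rw [ordLE_append]
      exact Or.inr ⟨heq, ordLE_single.2 hle.2⟩

theorem ocIn_iff {τ : Type*} [DecidableEq (τ → ℤ)] (r : List τ) (Z : Finset (τ → ℤ))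
    (A B : τ → ℤ) :
    ocIn r Z A B ↔
      ∀ t ∈ r, ∀ s ∈ r, (∀ C ∈ Z, C t = C s) → ¬(A t < A s ∧ B s < B t) := by
  constructor
  · intro h t ht s hs heq ⟨hA, hB⟩
    have heq' : ∀ C ∈ Z.toList, C t = C s := fun C hC => heq C (Finset.mem_toList.1 hC)
    have h1 := (h Z.toList Z.nodup_toList (Finset.toList_toFinset Z)).1 t ht s hs
      (by
        rw [List.append_assoc, List.singleton_append, ordLE_append]
        exact Or.inr ⟨heq', Or.inl hA⟩)
    rw [List.append_assoc, List.singleton_append, ordLE_append] at h1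
    rcases h1 with ⟨_, hne⟩ | ⟨_, h1⟩
    · exact hne heq'
    · rcases h1 with h1 | ⟨h1, _⟩
      · exact absurd h1 (not_lt.2 hB.le)
      · exact absurd h1.symm (ne_of_lt hB)
  · intro h Zp _ htf
    have hmem : ∀ C ∈ Zp, C ∈ Z := fun C hC => by
      rw [← htf]; exact List.mem_toFinset.2 hC
    have hmem' : ∀ t s : τ, (∀ C ∈ Zp, C t = C s) → ∀ C ∈ Z, C t = C s := by
      intro t s heq C hC
      rw [← htf] at hC
      exact heq C (List.mem_toFinset.1 hC)
    constructor
    · exact ocIn_aux r Zp A B fun t ht s hs heq =>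
        h t ht s hs (hmem' t s heq)
    · exact ocIn_aux r Zp B A fun t ht s hs heq hsw =>
        h s hs t ht (hmem' s t fun C hC => (heq C hC).symm) ⟨hsw.2, hsw.1⟩

theorem stmt_5 {τ : Type*} [DecidableEq (τ → ℤ)] (r : List τ) (X Y : List (τ → ℤ)) :
    satOD r X Y ↔
      (∀ A ∈ Y, constIn r X.toFinset A) ∧
      (∀ (i : Fin X.length) (j : Fin Y.length),
        ocIn r ((X.take i).toFinset ∪ (Y.take j).toFinset) (X.get i) (Y.get j)) := by
  constructor
  · intro h
    constructor
    · intro A hA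
      rw [constIn_iff]
      intro t ht s hs heq
      have heq' : ∀ B ∈ X, B t = B s := fun B hB => heq B (List.mem_toFinset.2 hB)
      have h1 := h t ht s hs (ordLE_of_eq heq')
      have h2 := h s hs t ht (ordLE_of_eq fun B hB => (heq' B hB).symm)
      exact ordLE_antisymm h1 h2 A hA
    · intro i j
      rw [ocIn_iff]
      rintro t ht s hs heq ⟨hXi, hYj⟩
      have heqX : ∀ A ∈ X.take i, A t = A s := fun A hm =>
        heq A (Finset.mem_union_left _ (List.mem_toFinset.2 hm))
      have heqY : ∀ A ∈ Y.take j, A t = A s := fun A hm =>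
        heq A (Finset.mem_union_right _ (List.mem_toFinset.2 hm))
      have hX : ordLE X t s := ordLE_of_take_get heqX hXi
      have hY : ordLE Y t s := h t ht s hs hX
      exact absurd (take_get_le hY heqY) (not_le.2 hYj)
  · rintro ⟨hc, hoc⟩ t ht s hs hX
    by_cases heqX : ∀ A ∈ X, A t = A s
    · exact ordLE_of_eq fun A hA =>
        (constIn_iff r X.toFinset A).1 (hc A hA) t ht s hs
          (fun B hB => heqX B (List.mem_toFinset.1 hB))
    · by_contra hY
      have hYst : ordLE Y s t := (ordLE_total Y t s).resolve_left hY
      have hneY : ¬ ∀ A ∈ Y, A s = A t := fun he =>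
        hY (ordLE_of_eq fun A hA => (he A hA).symm)
      obtain ⟨j, hj1, hj2⟩ := exists_first Y s t hYst hneY
      obtain ⟨i, hi1, hi2⟩ := exists_first X t s hX heqX
      refine (ocIn_iff r _ (X.get i) (Y.get j)).1 (hoc i j) t ht s hs ?_ ⟨hi2, hj2⟩
      intro C hC
      rcases Finset.mem_union.1 hC with h' | h'
      · exact hi1 C (List.mem_toFinset.1 h')
      · exact (hj1 C (List.mem_toFinset.1 h')).symm
end

section
/- For any table r and any lists of attributes X, Y, Z: if r satisfies the order compatibility Y ~ Z, then r satisfies the order compatibility X ++ Y ~ X ++ Z. -/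
def eqL {τ : Type*} : List (τ → ℤ) → τ → τ → Prop
  | [], _, _ => True
  | A :: T, t, s => A t = A s ∧ eqL T t s

lemma eqL_append {τ : Type*} (X Y : List (τ → ℤ)) (t s : τ) :
    eqL (X ++ Y) t s ↔ eqL X t s ∧ eqL Y t s := by
  induction X with
  | nil => simp [eqL]
  | cons A T ih => simp [eqL, ih]; tauto

lemma ordLE_append_s6 {τ : Type*} (X Y : List (τ → ℤ)) (t s : τ) :
    ordLE (X ++ Y) t s ↔ (ordLE X t s ∧ ¬ eqL X t s) ∨ (eqL X t s ∧ ordLE Y t s) := by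
  induction X with
  | nil => simp [ordLE, eqL]
  | cons A T ih =>
    simp only [List.cons_append, ordLE, eqL]
    rw [ih]
    constructor
    · rintro (hlt | ⟨he, (⟨h1, h2⟩ | ⟨h1, h2⟩)⟩)
      · exact Or.inl ⟨Or.inl hlt, fun ⟨he, _⟩ => absurd he (ne_of_lt hlt)⟩
      · exact Or.inl ⟨Or.inr ⟨he, h1⟩, fun ⟨_, hT⟩ => h2 hT⟩
      · exact Or.inr ⟨⟨he, h1⟩, h2⟩
    · rintro (⟨(hlt | ⟨he, hT⟩), hne⟩ | ⟨⟨he, hT⟩, hZ⟩)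
      · exact Or.inl hlt
      · exact Or.inr ⟨he, Or.inl ⟨hT, fun hT' => hne ⟨he, hT'⟩⟩⟩
      · exact Or.inr ⟨he, Or.inr ⟨hT, hZ⟩⟩

lemma key_dir {τ : Type*} (r : List τ) (X Y Z : List (τ → ℤ))
    (h : satOD r (Y ++ Z) (Z ++ Y)) :
    satOD r ((X ++ Y) ++ (X ++ Z)) ((X ++ Z) ++ (X ++ Y)) := by
  intro t ht s hs hord
  rw [ordLE_append_s6, eqL_append, ordLE_append_s6, ordLE_append_s6] at hord
  rw [ordLE_append_s6, eqL_append, ordLE_append_s6, ordLE_append_s6]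
  rcases hord with ⟨(hX | ⟨heX, hY⟩), hne⟩ | ⟨⟨heX, heY⟩, (hX2 | ⟨_, hZ⟩)⟩
  · exact Or.inl ⟨Or.inl hX, fun ⟨heX, _⟩ => hne ⟨heX, (by tauto)⟩⟩
  · -- eqL X, ordLE Y, ¬(eqL X ∧ eqL Y) so ¬ eqL Y
    have hneY : ¬ eqL Y t s := fun hY' => hne ⟨heX, hY'⟩
    have hYZ : ordLE (Y ++ Z) t s := by rw [ordLE_append_s6]; exact Or.inl ⟨hY, hneY⟩
    have hZY := h t ht s hs hYZ
    rw [ordLE_append_s6] at hZY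
    rcases hZY with ⟨hZ, hneZ⟩ | ⟨heZ, hY'⟩
    · exact Or.inl ⟨Or.inr ⟨heX, hZ⟩, fun ⟨_, hZ'⟩ => hneZ hZ'⟩
    · exact Or.inr ⟨⟨heX, heZ⟩, Or.inr ⟨heX, hY'⟩⟩
  · exact absurd heX hX2.2
  · have hYZ : ordLE (Y ++ Z) t s := by rw [ordLE_append_s6]; exact Or.inr ⟨heY, hZ⟩
    have hZY := h t ht s hs hYZ
    rw [ordLE_append_s6] at hZY
    rcases hZY with ⟨hZ', hneZ⟩ | ⟨heZ, hY'⟩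
    · exact Or.inl ⟨Or.inr ⟨heX, hZ'⟩, fun ⟨_, hZ''⟩ => hneZ hZ''⟩
    · exact Or.inr ⟨⟨heX, heZ⟩, Or.inr ⟨heX, hY'⟩⟩

theorem stmt_6 {τ : Type*} (r : List τ) (X Y Z : List (τ → ℤ))
    (h : satOCD r Y Z) : satOCD r (X ++ Y) (X ++ Z) := by
  exact ⟨key_dir r X Y Z h.1, key_dir r X Z Y h.2⟩
end
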